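/- Let m ≥ 1, let a₁, ..., aₘ ∈ O be nonzero, let c ∈ O, let w(a₁, ..., aₘ, x) be a multilinear monomial in the letters a₁, ..., aₘ, x, and let X ⊆ O be the set of all x ∈ O with w(a₁, ..., aₘ, x) = c. Then exactly one of the following holds: (a) X is empty; (b) X has exactly one element; (c) X ∈ Ω_r for some r with 4 ≤ r ≤ 7; (d) X = O. Moreover, each of the conditions (a)–(d) occurs for some linear monomial equation, and X has exactly one element if and only if n(aᵢ) ≠ 0 for all i = 1, ..., m. -/

import Mathlib

open Matrix

/-- Split octonions over `F`, written in coordinates: an octonion `(α, u; v, β)` with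
`u, v ∈ F³` is the vector `(α, u₁, u₂, u₃, v₁, v₂, v₃, β) ∈ F⁸`
(coordinate `0` is `α`, coordinates `1,2,3` are `u`, coordinates `4,5,6` are `v`,
coordinate `7` is `β`). -/
abbrev Octo (F : Type*) := Fin 8 → F

variable {F : Type*} [Field F]

/-- Zorn vector-matrix multiplication of split octonions:
`(α, u; v, β)·(α', u'; v', β') =
 (αα' + u·v', αu' + β'u − v×v'; α'v + βv' + u×u', ββ' + v·u')`. -/
def octMul (x y : Octo F) : Octo F :=
  ![x 0 * y 0 + (x 1 * y 4 + x 2 * y 5 + x 3 * y 6),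
    x 0 * y 1 + y 7 * x 1 - (x 5 * y 6 - x 6 * y 5),
    x 0 * y 2 + y 7 * x 2 - (x 6 * y 4 - x 4 * y 6),
    x 0 * y 3 + y 7 * x 3 - (x 4 * y 5 - x 5 * y 4),
    y 0 * x 4 + x 7 * y 4 + (x 2 * y 3 - x 3 * y 2),
    y 0 * x 5 + x 7 * y 5 + (x 3 * y 1 - x 1 * y 3),
    y 0 * x 6 + x 7 * y 6 + (x 1 * y 2 - x 2 * y 1),
    x 7 * y 7 + (x 4 * y 1 + x 5 * y 2 + x 6 * y 3)]

/-- Conjugation of split octonions: `(α, u; v, β) ↦ (β, −u; −v, α)`. -/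
def octConj (x : Octo F) : Octo F :=
  ![x 7, -(x 1), -(x 2), -(x 3), -(x 4), -(x 5), -(x 6), x 0]

/-- The norm `n(a) = αβ − u·v` of a split octonion. -/
def octNorm (x : Octo F) : F := x 0 * x 7 - (x 1 * x 4 + x 2 * x 5 + x 3 * x 6)

/-- The trace `tr(a) = α + β` of a split octonion. -/
def octTr (x : Octo F) : F := x 0 + x 7

/-- The unit octonion `1 = (1, 0; 0, 1)`. -/
def octOne : Octo F := ![1, 0, 0, 0, 0, 0, 0, 1]

def octE1 : Octo F := ![1, 0, 0, 0, 0, 0, 0, 0]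
def octE2 : Octo F := ![0, 0, 0, 0, 0, 0, 0, 1]
def octU1 : Octo F := ![0, 1, 0, 0, 0, 0, 0, 0]
def octU2 : Octo F := ![0, 0, 1, 0, 0, 0, 0, 0]
def octU3 : Octo F := ![0, 0, 0, 1, 0, 0, 0, 0]
def octV1 : Octo F := ![0, 0, 0, 0, 1, 0, 0, 0]
def octV2 : Octo F := ![0, 0, 0, 0, 0, 1, 0, 0]
def octV3 : Octo F := ![0, 0, 0, 0, 0, 0, 1, 0]

/-- `g` is an automorphism of the split octonion algebra: an `F`-linear bijection
preserving the multiplication. -/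
def IsOctAut (g : Octo F ≃ₗ[F] Octo F) : Prop :=
  ∀ x y : Octo F, g (octMul x y) = octMul (g x) (g y)

/-- `X ∈ Ω_d`: `X` is a `d`-dimensional affine subspace (flat) of `O ≅ F⁸`,
i.e. `X = V + a` for an `F`-linear subspace `V` of dimension `d` and some `a`. -/
def IsFlat (d : ℕ) (X : Set (Octo F)) : Prop :=
  ∃ (V : Submodule F (Octo F)) (a : Octo F),
    Module.finrank F V = d ∧ X = (fun v => v + a) '' (V : Set (Octo F))

/-- Nonassociative words (elements of the free magma) in the letters `a₁, …, aₘ` and a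
variable letter `x`. -/
inductive OctWord (m : ℕ) where
  | var : OctWord m
  | const : Fin m → OctWord m
  | mul : OctWord m → OctWord m → OctWord m

/-- Number of occurrences of the variable letter `x` in a word. -/
def OctWord.countVar {m : ℕ} : OctWord m → ℕ
  | .var => 1
  | .const _ => 0
  | .mul w₁ w₂ => w₁.countVar + w₂.countVar

/-- Number of occurrences of the letter `aᵢ` in a word. -/
def OctWord.countConst {m : ℕ} (i : Fin m) : OctWord m → ℕ
  | .var => 0
  | .const j => if j = i then 1 else 0
  | .mul w₁ w₂ => w₁.countConst i + w₂.countConst i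

/-- A multilinear monomial: each of the letters `a₁, …, aₘ, x` occurs exactly once. -/
def OctWord.Multilinear {m : ℕ} (w : OctWord m) : Prop :=
  w.countVar = 1 ∧ ∀ i : Fin m, w.countConst i = 1

/-- Evaluation of a word in the split octonions, substituting `a i` for the letter `aᵢ`
and `x` for the variable letter. -/
def OctWord.eval {m : ℕ} (a : Fin m → Octo F) (x : Octo F) : OctWord m → Octo F
  | .var => x
  | .const i => a i
  | .mul w₁ w₂ => octMul (OctWord.eval a x w₁) (OctWord.eval a x w₂)

/-- The solution set of the linear monomial equation `w(a₁, …, aₘ, x) = c`. -/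
def octSolW {m : ℕ} (w : OctWord m) (a : Fin m → Octo F) (c : Octo F) : Set (Octo F) :=
  {x : Octo F | OctWord.eval a x w = c}


namespace OctAux
set_option linter.unusedSectionVars false
variable {F : Type*} [Field F]

lemma octo_ext {x y : Octo F} (h0 : x 0 = y 0) (h1 : x 1 = y 1) (h2 : x 2 = y 2)
    (h3 : x 3 = y 3) (h4 : x 4 = y 4) (h5 : x 5 = y 5) (h6 : x 6 = y 6)
    (h7 : x 7 = y 7) : x = y := by
  funext i; fin_cases i <;> exact_mod_cast ‹_›

@[simp] lemma octMul_0 (x y : Octo F) : octMul x y 0 = x 0 * y 0 + (x 1 * y 4 + x 2 * y 5 + x 3 * y 6) := rfl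
@[simp] lemma octMul_1 (x y : Octo F) : octMul x y 1 = x 0 * y 1 + y 7 * x 1 - (x 5 * y 6 - x 6 * y 5) := rfl
@[simp] lemma octMul_2 (x y : Octo F) : octMul x y 2 = x 0 * y 2 + y 7 * x 2 - (x 6 * y 4 - x 4 * y 6) := rfl
@[simp] lemma octMul_3 (x y : Octo F) : octMul x y 3 = x 0 * y 3 + y 7 * x 3 - (x 4 * y 5 - x 5 * y 4) := rfl
@[simp] lemma octMul_4 (x y : Octo F) : octMul x y 4 = y 0 * x 4 + x 7 * y 4 + (x 2 * y 3 - x 3 * y 2) := rfl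
@[simp] lemma octMul_5 (x y : Octo F) : octMul x y 5 = y 0 * x 5 + x 7 * y 5 + (x 3 * y 1 - x 1 * y 3) := rfl
@[simp] lemma octMul_6 (x y : Octo F) : octMul x y 6 = y 0 * x 6 + x 7 * y 6 + (x 1 * y 2 - x 2 * y 1) := rfl
@[simp] lemma octMul_7 (x y : Octo F) : octMul x y 7 = x 7 * y 7 + (x 4 * y 1 + x 5 * y 2 + x 6 * y 3) := rfl
@[simp] lemma octConj_0 (x : Octo F) : octConj x 0 = x 7 := rfl
@[simp] lemma octConj_1 (x : Octo F) : octConj x 1 = -(x 1) := rfl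
@[simp] lemma octConj_2 (x : Octo F) : octConj x 2 = -(x 2) := rfl
@[simp] lemma octConj_3 (x : Octo F) : octConj x 3 = -(x 3) := rfl
@[simp] lemma octConj_4 (x : Octo F) : octConj x 4 = -(x 4) := rfl
@[simp] lemma octConj_5 (x : Octo F) : octConj x 5 = -(x 5) := rfl
@[simp] lemma octConj_6 (x : Octo F) : octConj x 6 = -(x 6) := rfl
@[simp] lemma octConj_7 (x : Octo F) : octConj x 7 = x 0 := rfl

lemma norm_mul (x y : Octo F) : octNorm (octMul x y) = octNorm x * octNorm y := by
  simp only [octNorm, octMul_0, octMul_1, octMul_2, octMul_3, octMul_4, octMul_5,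
    octMul_6, octMul_7]; ring

lemma conj_mul_mul (x y : Octo F) : octMul (octConj x) (octMul x y) = octNorm x • y := by
  refine octo_ext ?_ ?_ ?_ ?_ ?_ ?_ ?_ ?_ <;>
    simp only [octMul_0, octMul_1, octMul_2, octMul_3, octMul_4, octMul_5, octMul_6,
      octMul_7, octConj_0, octConj_1, octConj_2, octConj_3, octConj_4, octConj_5,
      octConj_6, octConj_7, Pi.smul_apply, smul_eq_mul, octNorm] <;> ring

lemma mul_mul_conj (x y : Octo F) : octMul (octMul y x) (octConj x) = octNorm x • y := by
  refine octo_ext ?_ ?_ ?_ ?_ ?_ ?_ ?_ ?_ <;>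
    simp only [octMul_0, octMul_1, octMul_2, octMul_3, octMul_4, octMul_5, octMul_6,
      octMul_7, octConj_0, octConj_1, octConj_2, octConj_3, octConj_4, octConj_5,
      octConj_6, octConj_7, Pi.smul_apply, smul_eq_mul, octNorm] <;> ring

lemma conj_conj (x : Octo F) : octConj (octConj x) = x := by
  refine octo_ext ?_ ?_ ?_ ?_ ?_ ?_ ?_ ?_ <;> simp

lemma norm_conj (x : Octo F) : octNorm (octConj x) = octNorm x := by
  simp [octNorm]; ring


/-- left multiplication as a linear map -/
def lmulL (b : Octo F) : Octo F →ₗ[F] Octo F where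
  toFun x := octMul b x
  map_add' x y := by
    refine octo_ext ?_ ?_ ?_ ?_ ?_ ?_ ?_ ?_ <;>
      simp only [octMul_0, octMul_1, octMul_2, octMul_3, octMul_4, octMul_5, octMul_6,
        octMul_7, Pi.add_apply] <;> ring
  map_smul' c x := by
    refine octo_ext ?_ ?_ ?_ ?_ ?_ ?_ ?_ ?_ <;>
      simp only [octMul_0, octMul_1, octMul_2, octMul_3, octMul_4, octMul_5, octMul_6,
        octMul_7, Pi.smul_apply, smul_eq_mul, RingHom.id_apply] <;> ring

def rmulL (b : Octo F) : Octo F →ₗ[F] Octo F where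
  toFun x := octMul x b
  map_add' x y := by
    refine octo_ext ?_ ?_ ?_ ?_ ?_ ?_ ?_ ?_ <;>
      simp only [octMul_0, octMul_1, octMul_2, octMul_3, octMul_4, octMul_5, octMul_6,
        octMul_7, Pi.add_apply] <;> ring
  map_smul' c x := by
    refine octo_ext ?_ ?_ ?_ ?_ ?_ ?_ ?_ ?_ <;>
      simp only [octMul_0, octMul_1, octMul_2, octMul_3, octMul_4, octMul_5, octMul_6,
        octMul_7, Pi.smul_apply, smul_eq_mul, RingHom.id_apply] <;> ring

@[simp] lemma lmulL_apply (b x : Octo F) : lmulL b x = octMul b x := rfl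
@[simp] lemma rmulL_apply (b x : Octo F) : rmulL b x = octMul x b := rfl
def lmat (b : Octo F) : Matrix (Fin 8) (Fin 8) F := Matrix.of
 ![![b 0,0,0,0,b 1,b 2,b 3,0],
   ![0,b 0,0,0,0,b 6,-b 5,b 1],
   ![0,0,b 0,0,-b 6,0,b 4,b 2],
   ![0,0,0,b 0,b 5,-b 4,0,b 3],
   ![b 4,0,-b 3,b 2,b 7,0,0,0],
   ![b 5,b 3,0,-b 1,0,b 7,0,0],
   ![b 6,-b 2,b 1,0,0,0,b 7,0],
   ![0,b 4,b 5,b 6,0,0,0,b 7]]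

@[simp] lemma lmatE_0_0 (b : Octo F) : lmat (F := F) b 0 0 = (b 0 : F) := rfl
@[simp] lemma lmatE_0_1 (b : Octo F) : lmat (F := F) b 0 1 = (0 : F) := rfl
@[simp] lemma lmatE_0_2 (b : Octo F) : lmat (F := F) b 0 2 = (0 : F) := rfl
@[simp] lemma lmatE_0_3 (b : Octo F) : lmat (F := F) b 0 3 = (0 : F) := rfl
@[simp] lemma lmatE_0_4 (b : Octo F) : lmat (F := F) b 0 4 = (b 1 : F) := rfl
@[simp] lemma lmatE_0_5 (b : Octo F) : lmat (F := F) b 0 5 = (b 2 : F) := rfl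
@[simp] lemma lmatE_0_6 (b : Octo F) : lmat (F := F) b 0 6 = (b 3 : F) := rfl
@[simp] lemma lmatE_0_7 (b : Octo F) : lmat (F := F) b 0 7 = (0 : F) := rfl
@[simp] lemma lmatE_1_0 (b : Octo F) : lmat (F := F) b 1 0 = (0 : F) := rfl
@[simp] lemma lmatE_1_1 (b : Octo F) : lmat (F := F) b 1 1 = (b 0 : F) := rfl
@[simp] lemma lmatE_1_2 (b : Octo F) : lmat (F := F) b 1 2 = (0 : F) := rfl
@[simp] lemma lmatE_1_3 (b : Octo F) : lmat (F := F) b 1 3 = (0 : F) := rfl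
@[simp] lemma lmatE_1_4 (b : Octo F) : lmat (F := F) b 1 4 = (0 : F) := rfl
@[simp] lemma lmatE_1_5 (b : Octo F) : lmat (F := F) b 1 5 = (b 6 : F) := rfl
@[simp] lemma lmatE_1_6 (b : Octo F) : lmat (F := F) b 1 6 = (-b 5 : F) := rfl
@[simp] lemma lmatE_1_7 (b : Octo F) : lmat (F := F) b 1 7 = (b 1 : F) := rfl
@[simp] lemma lmatE_2_0 (b : Octo F) : lmat (F := F) b 2 0 = (0 : F) := rfl
@[simp] lemma lmatE_2_1 (b : Octo F) : lmat (F := F) b 2 1 = (0 : F) := rfl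
@[simp] lemma lmatE_2_2 (b : Octo F) : lmat (F := F) b 2 2 = (b 0 : F) := rfl
@[simp] lemma lmatE_2_3 (b : Octo F) : lmat (F := F) b 2 3 = (0 : F) := rfl
@[simp] lemma lmatE_2_4 (b : Octo F) : lmat (F := F) b 2 4 = (-b 6 : F) := rfl
@[simp] lemma lmatE_2_5 (b : Octo F) : lmat (F := F) b 2 5 = (0 : F) := rfl
@[simp] lemma lmatE_2_6 (b : Octo F) : lmat (F := F) b 2 6 = (b 4 : F) := rfl
@[simp] lemma lmatE_2_7 (b : Octo F) : lmat (F := F) b 2 7 = (b 2 : F) := rfl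
@[simp] lemma lmatE_3_0 (b : Octo F) : lmat (F := F) b 3 0 = (0 : F) := rfl
@[simp] lemma lmatE_3_1 (b : Octo F) : lmat (F := F) b 3 1 = (0 : F) := rfl
@[simp] lemma lmatE_3_2 (b : Octo F) : lmat (F := F) b 3 2 = (0 : F) := rfl
@[simp] lemma lmatE_3_3 (b : Octo F) : lmat (F := F) b 3 3 = (b 0 : F) := rfl
@[simp] lemma lmatE_3_4 (b : Octo F) : lmat (F := F) b 3 4 = (b 5 : F) := rfl
@[simp] lemma lmatE_3_5 (b : Octo F) : lmat (F := F) b 3 5 = (-b 4 : F) := rfl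
@[simp] lemma lmatE_3_6 (b : Octo F) : lmat (F := F) b 3 6 = (0 : F) := rfl
@[simp] lemma lmatE_3_7 (b : Octo F) : lmat (F := F) b 3 7 = (b 3 : F) := rfl
@[simp] lemma lmatE_4_0 (b : Octo F) : lmat (F := F) b 4 0 = (b 4 : F) := rfl
@[simp] lemma lmatE_4_1 (b : Octo F) : lmat (F := F) b 4 1 = (0 : F) := rfl
@[simp] lemma lmatE_4_2 (b : Octo F) : lmat (F := F) b 4 2 = (-b 3 : F) := rfl
@[simp] lemma lmatE_4_3 (b : Octo F) : lmat (F := F) b 4 3 = (b 2 : F) := rfl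
@[simp] lemma lmatE_4_4 (b : Octo F) : lmat (F := F) b 4 4 = (b 7 : F) := rfl
@[simp] lemma lmatE_4_5 (b : Octo F) : lmat (F := F) b 4 5 = (0 : F) := rfl
@[simp] lemma lmatE_4_6 (b : Octo F) : lmat (F := F) b 4 6 = (0 : F) := rfl
@[simp] lemma lmatE_4_7 (b : Octo F) : lmat (F := F) b 4 7 = (0 : F) := rfl
@[simp] lemma lmatE_5_0 (b : Octo F) : lmat (F := F) b 5 0 = (b 5 : F) := rfl
@[simp] lemma lmatE_5_1 (b : Octo F) : lmat (F := F) b 5 1 = (b 3 : F) := rfl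
@[simp] lemma lmatE_5_2 (b : Octo F) : lmat (F := F) b 5 2 = (0 : F) := rfl
@[simp] lemma lmatE_5_3 (b : Octo F) : lmat (F := F) b 5 3 = (-b 1 : F) := rfl
@[simp] lemma lmatE_5_4 (b : Octo F) : lmat (F := F) b 5 4 = (0 : F) := rfl
@[simp] lemma lmatE_5_5 (b : Octo F) : lmat (F := F) b 5 5 = (b 7 : F) := rfl
@[simp] lemma lmatE_5_6 (b : Octo F) : lmat (F := F) b 5 6 = (0 : F) := rfl
@[simp] lemma lmatE_5_7 (b : Octo F) : lmat (F := F) b 5 7 = (0 : F) := rfl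
@[simp] lemma lmatE_6_0 (b : Octo F) : lmat (F := F) b 6 0 = (b 6 : F) := rfl
@[simp] lemma lmatE_6_1 (b : Octo F) : lmat (F := F) b 6 1 = (-b 2 : F) := rfl
@[simp] lemma lmatE_6_2 (b : Octo F) : lmat (F := F) b 6 2 = (b 1 : F) := rfl
@[simp] lemma lmatE_6_3 (b : Octo F) : lmat (F := F) b 6 3 = (0 : F) := rfl
@[simp] lemma lmatE_6_4 (b : Octo F) : lmat (F := F) b 6 4 = (0 : F) := rfl
@[simp] lemma lmatE_6_5 (b : Octo F) : lmat (F := F) b 6 5 = (0 : F) := rfl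
@[simp] lemma lmatE_6_6 (b : Octo F) : lmat (F := F) b 6 6 = (b 7 : F) := rfl
@[simp] lemma lmatE_6_7 (b : Octo F) : lmat (F := F) b 6 7 = (0 : F) := rfl
@[simp] lemma lmatE_7_0 (b : Octo F) : lmat (F := F) b 7 0 = (0 : F) := rfl
@[simp] lemma lmatE_7_1 (b : Octo F) : lmat (F := F) b 7 1 = (b 4 : F) := rfl
@[simp] lemma lmatE_7_2 (b : Octo F) : lmat (F := F) b 7 2 = (b 5 : F) := rfl
@[simp] lemma lmatE_7_3 (b : Octo F) : lmat (F := F) b 7 3 = (b 6 : F) := rfl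
@[simp] lemma lmatE_7_4 (b : Octo F) : lmat (F := F) b 7 4 = (0 : F) := rfl
@[simp] lemma lmatE_7_5 (b : Octo F) : lmat (F := F) b 7 5 = (0 : F) := rfl
@[simp] lemma lmatE_7_6 (b : Octo F) : lmat (F := F) b 7 6 = (0 : F) := rfl
@[simp] lemma lmatE_7_7 (b : Octo F) : lmat (F := F) b 7 7 = (b 7 : F) := rfl

def rmat (b : Octo F) : Matrix (Fin 8) (Fin 8) F := Matrix.of
 ![![b 0,b 4,b 5,b 6,0,0,0,0],
   ![b 1,b 7,0,0,0,-b 6,b 5,0],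
   ![b 2,0,b 7,0,b 6,0,-b 4,0],
   ![b 3,0,0,b 7,-b 5,b 4,0,0],
   ![0,0,b 3,-b 2,b 0,0,0,b 4],
   ![0,-b 3,0,b 1,0,b 0,0,b 5],
   ![0,b 2,-b 1,0,0,0,b 0,b 6],
   ![0,0,0,0,b 1,b 2,b 3,b 7]]

@[simp] lemma rmatE_0_0 (b : Octo F) : rmat (F := F) b 0 0 = (b 0 : F) := rfl
@[simp] lemma rmatE_0_1 (b : Octo F) : rmat (F := F) b 0 1 = (b 4 : F) := rfl
@[simp] lemma rmatE_0_2 (b : Octo F) : rmat (F := F) b 0 2 = (b 5 : F) := rfl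
@[simp] lemma rmatE_0_3 (b : Octo F) : rmat (F := F) b 0 3 = (b 6 : F) := rfl
@[simp] lemma rmatE_0_4 (b : Octo F) : rmat (F := F) b 0 4 = (0 : F) := rfl
@[simp] lemma rmatE_0_5 (b : Octo F) : rmat (F := F) b 0 5 = (0 : F) := rfl
@[simp] lemma rmatE_0_6 (b : Octo F) : rmat (F := F) b 0 6 = (0 : F) := rfl
@[simp] lemma rmatE_0_7 (b : Octo F) : rmat (F := F) b 0 7 = (0 : F) := rfl
@[simp] lemma rmatE_1_0 (b : Octo F) : rmat (F := F) b 1 0 = (b 1 : F) := rfl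
@[simp] lemma rmatE_1_1 (b : Octo F) : rmat (F := F) b 1 1 = (b 7 : F) := rfl
@[simp] lemma rmatE_1_2 (b : Octo F) : rmat (F := F) b 1 2 = (0 : F) := rfl
@[simp] lemma rmatE_1_3 (b : Octo F) : rmat (F := F) b 1 3 = (0 : F) := rfl
@[simp] lemma rmatE_1_4 (b : Octo F) : rmat (F := F) b 1 4 = (0 : F) := rfl
@[simp] lemma rmatE_1_5 (b : Octo F) : rmat (F := F) b 1 5 = (-b 6 : F) := rfl
@[simp] lemma rmatE_1_6 (b : Octo F) : rmat (F := F) b 1 6 = (b 5 : F) := rfl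
@[simp] lemma rmatE_1_7 (b : Octo F) : rmat (F := F) b 1 7 = (0 : F) := rfl
@[simp] lemma rmatE_2_0 (b : Octo F) : rmat (F := F) b 2 0 = (b 2 : F) := rfl
@[simp] lemma rmatE_2_1 (b : Octo F) : rmat (F := F) b 2 1 = (0 : F) := rfl
@[simp] lemma rmatE_2_2 (b : Octo F) : rmat (F := F) b 2 2 = (b 7 : F) := rfl
@[simp] lemma rmatE_2_3 (b : Octo F) : rmat (F := F) b 2 3 = (0 : F) := rfl
@[simp] lemma rmatE_2_4 (b : Octo F) : rmat (F := F) b 2 4 = (b 6 : F) := rfl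
@[simp] lemma rmatE_2_5 (b : Octo F) : rmat (F := F) b 2 5 = (0 : F) := rfl
@[simp] lemma rmatE_2_6 (b : Octo F) : rmat (F := F) b 2 6 = (-b 4 : F) := rfl
@[simp] lemma rmatE_2_7 (b : Octo F) : rmat (F := F) b 2 7 = (0 : F) := rfl
@[simp] lemma rmatE_3_0 (b : Octo F) : rmat (F := F) b 3 0 = (b 3 : F) := rfl
@[simp] lemma rmatE_3_1 (b : Octo F) : rmat (F := F) b 3 1 = (0 : F) := rfl
@[simp] lemma rmatE_3_2 (b : Octo F) : rmat (F := F) b 3 2 = (0 : F) := rfl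
@[simp] lemma rmatE_3_3 (b : Octo F) : rmat (F := F) b 3 3 = (b 7 : F) := rfl
@[simp] lemma rmatE_3_4 (b : Octo F) : rmat (F := F) b 3 4 = (-b 5 : F) := rfl
@[simp] lemma rmatE_3_5 (b : Octo F) : rmat (F := F) b 3 5 = (b 4 : F) := rfl
@[simp] lemma rmatE_3_6 (b : Octo F) : rmat (F := F) b 3 6 = (0 : F) := rfl
@[simp] lemma rmatE_3_7 (b : Octo F) : rmat (F := F) b 3 7 = (0 : F) := rfl
@[simp] lemma rmatE_4_0 (b : Octo F) : rmat (F := F) b 4 0 = (0 : F) := rfl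
@[simp] lemma rmatE_4_1 (b : Octo F) : rmat (F := F) b 4 1 = (0 : F) := rfl
@[simp] lemma rmatE_4_2 (b : Octo F) : rmat (F := F) b 4 2 = (b 3 : F) := rfl
@[simp] lemma rmatE_4_3 (b : Octo F) : rmat (F := F) b 4 3 = (-b 2 : F) := rfl
@[simp] lemma rmatE_4_4 (b : Octo F) : rmat (F := F) b 4 4 = (b 0 : F) := rfl
@[simp] lemma rmatE_4_5 (b : Octo F) : rmat (F := F) b 4 5 = (0 : F) := rfl
@[simp] lemma rmatE_4_6 (b : Octo F) : rmat (F := F) b 4 6 = (0 : F) := rfl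
@[simp] lemma rmatE_4_7 (b : Octo F) : rmat (F := F) b 4 7 = (b 4 : F) := rfl
@[simp] lemma rmatE_5_0 (b : Octo F) : rmat (F := F) b 5 0 = (0 : F) := rfl
@[simp] lemma rmatE_5_1 (b : Octo F) : rmat (F := F) b 5 1 = (-b 3 : F) := rfl
@[simp] lemma rmatE_5_2 (b : Octo F) : rmat (F := F) b 5 2 = (0 : F) := rfl
@[simp] lemma rmatE_5_3 (b : Octo F) : rmat (F := F) b 5 3 = (b 1 : F) := rfl
@[simp] lemma rmatE_5_4 (b : Octo F) : rmat (F := F) b 5 4 = (0 : F) := rfl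
@[simp] lemma rmatE_5_5 (b : Octo F) : rmat (F := F) b 5 5 = (b 0 : F) := rfl
@[simp] lemma rmatE_5_6 (b : Octo F) : rmat (F := F) b 5 6 = (0 : F) := rfl
@[simp] lemma rmatE_5_7 (b : Octo F) : rmat (F := F) b 5 7 = (b 5 : F) := rfl
@[simp] lemma rmatE_6_0 (b : Octo F) : rmat (F := F) b 6 0 = (0 : F) := rfl
@[simp] lemma rmatE_6_1 (b : Octo F) : rmat (F := F) b 6 1 = (b 2 : F) := rfl
@[simp] lemma rmatE_6_2 (b : Octo F) : rmat (F := F) b 6 2 = (-b 1 : F) := rfl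
@[simp] lemma rmatE_6_3 (b : Octo F) : rmat (F := F) b 6 3 = (0 : F) := rfl
@[simp] lemma rmatE_6_4 (b : Octo F) : rmat (F := F) b 6 4 = (0 : F) := rfl
@[simp] lemma rmatE_6_5 (b : Octo F) : rmat (F := F) b 6 5 = (0 : F) := rfl
@[simp] lemma rmatE_6_6 (b : Octo F) : rmat (F := F) b 6 6 = (b 0 : F) := rfl
@[simp] lemma rmatE_6_7 (b : Octo F) : rmat (F := F) b 6 7 = (b 6 : F) := rfl
@[simp] lemma rmatE_7_0 (b : Octo F) : rmat (F := F) b 7 0 = (0 : F) := rfl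
@[simp] lemma rmatE_7_1 (b : Octo F) : rmat (F := F) b 7 1 = (0 : F) := rfl
@[simp] lemma rmatE_7_2 (b : Octo F) : rmat (F := F) b 7 2 = (0 : F) := rfl
@[simp] lemma rmatE_7_3 (b : Octo F) : rmat (F := F) b 7 3 = (0 : F) := rfl
@[simp] lemma rmatE_7_4 (b : Octo F) : rmat (F := F) b 7 4 = (b 1 : F) := rfl
@[simp] lemma rmatE_7_5 (b : Octo F) : rmat (F := F) b 7 5 = (b 2 : F) := rfl
@[simp] lemma rmatE_7_6 (b : Octo F) : rmat (F := F) b 7 6 = (b 3 : F) := rfl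
@[simp] lemma rmatE_7_7 (b : Octo F) : rmat (F := F) b 7 7 = (b 7 : F) := rfl

def jmat : Matrix (Fin 8) (Fin 8) F := Matrix.of
 ![![0,0,0,0,0,0,0,1],
   ![0,0,0,0,-1,0,0,0],
   ![0,0,0,0,0,-1,0,0],
   ![0,0,0,0,0,0,-1,0],
   ![0,-1,0,0,0,0,0,0],
   ![0,0,-1,0,0,0,0,0],
   ![0,0,0,-1,0,0,0,0],
   ![1,0,0,0,0,0,0,0]]

@[simp] lemma jmatE_0_0 : jmat (F := F) 0 0 = (0 : F) := rfl
@[simp] lemma jmatE_0_1 : jmat (F := F) 0 1 = (0 : F) := rfl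
@[simp] lemma jmatE_0_2 : jmat (F := F) 0 2 = (0 : F) := rfl
@[simp] lemma jmatE_0_3 : jmat (F := F) 0 3 = (0 : F) := rfl
@[simp] lemma jmatE_0_4 : jmat (F := F) 0 4 = (0 : F) := rfl
@[simp] lemma jmatE_0_5 : jmat (F := F) 0 5 = (0 : F) := rfl
@[simp] lemma jmatE_0_6 : jmat (F := F) 0 6 = (0 : F) := rfl
@[simp] lemma jmatE_0_7 : jmat (F := F) 0 7 = (1 : F) := rfl
@[simp] lemma jmatE_1_0 : jmat (F := F) 1 0 = (0 : F) := rfl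
@[simp] lemma jmatE_1_1 : jmat (F := F) 1 1 = (0 : F) := rfl
@[simp] lemma jmatE_1_2 : jmat (F := F) 1 2 = (0 : F) := rfl
@[simp] lemma jmatE_1_3 : jmat (F := F) 1 3 = (0 : F) := rfl
@[simp] lemma jmatE_1_4 : jmat (F := F) 1 4 = (-1 : F) := rfl
@[simp] lemma jmatE_1_5 : jmat (F := F) 1 5 = (0 : F) := rfl
@[simp] lemma jmatE_1_6 : jmat (F := F) 1 6 = (0 : F) := rfl
@[simp] lemma jmatE_1_7 : jmat (F := F) 1 7 = (0 : F) := rfl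
@[simp] lemma jmatE_2_0 : jmat (F := F) 2 0 = (0 : F) := rfl
@[simp] lemma jmatE_2_1 : jmat (F := F) 2 1 = (0 : F) := rfl
@[simp] lemma jmatE_2_2 : jmat (F := F) 2 2 = (0 : F) := rfl
@[simp] lemma jmatE_2_3 : jmat (F := F) 2 3 = (0 : F) := rfl
@[simp] lemma jmatE_2_4 : jmat (F := F) 2 4 = (0 : F) := rfl
@[simp] lemma jmatE_2_5 : jmat (F := F) 2 5 = (-1 : F) := rfl
@[simp] lemma jmatE_2_6 : jmat (F := F) 2 6 = (0 : F) := rfl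
@[simp] lemma jmatE_2_7 : jmat (F := F) 2 7 = (0 : F) := rfl
@[simp] lemma jmatE_3_0 : jmat (F := F) 3 0 = (0 : F) := rfl
@[simp] lemma jmatE_3_1 : jmat (F := F) 3 1 = (0 : F) := rfl
@[simp] lemma jmatE_3_2 : jmat (F := F) 3 2 = (0 : F) := rfl
@[simp] lemma jmatE_3_3 : jmat (F := F) 3 3 = (0 : F) := rfl
@[simp] lemma jmatE_3_4 : jmat (F := F) 3 4 = (0 : F) := rfl
@[simp] lemma jmatE_3_5 : jmat (F := F) 3 5 = (0 : F) := rfl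
@[simp] lemma jmatE_3_6 : jmat (F := F) 3 6 = (-1 : F) := rfl
@[simp] lemma jmatE_3_7 : jmat (F := F) 3 7 = (0 : F) := rfl
@[simp] lemma jmatE_4_0 : jmat (F := F) 4 0 = (0 : F) := rfl
@[simp] lemma jmatE_4_1 : jmat (F := F) 4 1 = (-1 : F) := rfl
@[simp] lemma jmatE_4_2 : jmat (F := F) 4 2 = (0 : F) := rfl
@[simp] lemma jmatE_4_3 : jmat (F := F) 4 3 = (0 : F) := rfl
@[simp] lemma jmatE_4_4 : jmat (F := F) 4 4 = (0 : F) := rfl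
@[simp] lemma jmatE_4_5 : jmat (F := F) 4 5 = (0 : F) := rfl
@[simp] lemma jmatE_4_6 : jmat (F := F) 4 6 = (0 : F) := rfl
@[simp] lemma jmatE_4_7 : jmat (F := F) 4 7 = (0 : F) := rfl
@[simp] lemma jmatE_5_0 : jmat (F := F) 5 0 = (0 : F) := rfl
@[simp] lemma jmatE_5_1 : jmat (F := F) 5 1 = (0 : F) := rfl
@[simp] lemma jmatE_5_2 : jmat (F := F) 5 2 = (-1 : F) := rfl
@[simp] lemma jmatE_5_3 : jmat (F := F) 5 3 = (0 : F) := rfl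
@[simp] lemma jmatE_5_4 : jmat (F := F) 5 4 = (0 : F) := rfl
@[simp] lemma jmatE_5_5 : jmat (F := F) 5 5 = (0 : F) := rfl
@[simp] lemma jmatE_5_6 : jmat (F := F) 5 6 = (0 : F) := rfl
@[simp] lemma jmatE_5_7 : jmat (F := F) 5 7 = (0 : F) := rfl
@[simp] lemma jmatE_6_0 : jmat (F := F) 6 0 = (0 : F) := rfl
@[simp] lemma jmatE_6_1 : jmat (F := F) 6 1 = (0 : F) := rfl
@[simp] lemma jmatE_6_2 : jmat (F := F) 6 2 = (0 : F) := rfl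
@[simp] lemma jmatE_6_3 : jmat (F := F) 6 3 = (-1 : F) := rfl
@[simp] lemma jmatE_6_4 : jmat (F := F) 6 4 = (0 : F) := rfl
@[simp] lemma jmatE_6_5 : jmat (F := F) 6 5 = (0 : F) := rfl
@[simp] lemma jmatE_6_6 : jmat (F := F) 6 6 = (0 : F) := rfl
@[simp] lemma jmatE_6_7 : jmat (F := F) 6 7 = (0 : F) := rfl
@[simp] lemma jmatE_7_0 : jmat (F := F) 7 0 = (1 : F) := rfl
@[simp] lemma jmatE_7_1 : jmat (F := F) 7 1 = (0 : F) := rfl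
@[simp] lemma jmatE_7_2 : jmat (F := F) 7 2 = (0 : F) := rfl
@[simp] lemma jmatE_7_3 : jmat (F := F) 7 3 = (0 : F) := rfl
@[simp] lemma jmatE_7_4 : jmat (F := F) 7 4 = (0 : F) := rfl
@[simp] lemma jmatE_7_5 : jmat (F := F) 7 5 = (0 : F) := rfl
@[simp] lemma jmatE_7_6 : jmat (F := F) 7 6 = (0 : F) := rfl
@[simp] lemma jmatE_7_7 : jmat (F := F) 7 7 = (0 : F) := rfl

def octLT (b x : Octo F) : Octo F :=
  ![b 0 * x 0 + b 4 * x 4 + b 5 * x 5 + b 6 * x 6,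
    b 0 * x 1 + b 3 * x 5 - b 2 * x 6 + b 4 * x 7,
    b 0 * x 2 - b 3 * x 4 + b 1 * x 6 + b 5 * x 7,
    b 0 * x 3 + b 2 * x 4 - b 1 * x 5 + b 6 * x 7,
    b 1 * x 0 - b 6 * x 2 + b 5 * x 3 + b 7 * x 4,
    b 2 * x 0 + b 6 * x 1 - b 4 * x 3 + b 7 * x 5,
    b 3 * x 0 - b 5 * x 1 + b 4 * x 2 + b 7 * x 6,
    b 1 * x 1 + b 2 * x 2 + b 3 * x 3 + b 7 * x 7]

@[simp] lemma octLT_0 (b x : Octo F) : octLT b x 0 = b 0 * x 0 + b 4 * x 4 + b 5 * x 5 + b 6 * x 6 := rfl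
@[simp] lemma octLT_1 (b x : Octo F) : octLT b x 1 = b 0 * x 1 + b 3 * x 5 - b 2 * x 6 + b 4 * x 7 := rfl
@[simp] lemma octLT_2 (b x : Octo F) : octLT b x 2 = b 0 * x 2 - b 3 * x 4 + b 1 * x 6 + b 5 * x 7 := rfl
@[simp] lemma octLT_3 (b x : Octo F) : octLT b x 3 = b 0 * x 3 + b 2 * x 4 - b 1 * x 5 + b 6 * x 7 := rfl
@[simp] lemma octLT_4 (b x : Octo F) : octLT b x 4 = b 1 * x 0 - b 6 * x 2 + b 5 * x 3 + b 7 * x 4 := rfl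
@[simp] lemma octLT_5 (b x : Octo F) : octLT b x 5 = b 2 * x 0 + b 6 * x 1 - b 4 * x 3 + b 7 * x 5 := rfl
@[simp] lemma octLT_6 (b x : Octo F) : octLT b x 6 = b 3 * x 0 - b 5 * x 1 + b 4 * x 2 + b 7 * x 6 := rfl
@[simp] lemma octLT_7 (b x : Octo F) : octLT b x 7 = b 1 * x 1 + b 2 * x 2 + b 3 * x 3 + b 7 * x 7 := rfl

def octRT (b x : Octo F) : Octo F :=
  ![b 0 * x 0 + b 1 * x 1 + b 2 * x 2 + b 3 * x 3,
    b 4 * x 0 + b 7 * x 1 - b 3 * x 5 + b 2 * x 6,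
    b 5 * x 0 + b 7 * x 2 + b 3 * x 4 - b 1 * x 6,
    b 6 * x 0 + b 7 * x 3 - b 2 * x 4 + b 1 * x 5,
    b 6 * x 2 - b 5 * x 3 + b 0 * x 4 + b 1 * x 7,
    - b 6 * x 1 + b 4 * x 3 + b 0 * x 5 + b 2 * x 7,
    b 5 * x 1 - b 4 * x 2 + b 0 * x 6 + b 3 * x 7,
    b 4 * x 4 + b 5 * x 5 + b 6 * x 6 + b 7 * x 7]

@[simp] lemma octRT_0 (b x : Octo F) : octRT b x 0 = b 0 * x 0 + b 1 * x 1 + b 2 * x 2 + b 3 * x 3 := rfl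
@[simp] lemma octRT_1 (b x : Octo F) : octRT b x 1 = b 4 * x 0 + b 7 * x 1 - b 3 * x 5 + b 2 * x 6 := rfl
@[simp] lemma octRT_2 (b x : Octo F) : octRT b x 2 = b 5 * x 0 + b 7 * x 2 + b 3 * x 4 - b 1 * x 6 := rfl
@[simp] lemma octRT_3 (b x : Octo F) : octRT b x 3 = b 6 * x 0 + b 7 * x 3 - b 2 * x 4 + b 1 * x 5 := rfl
@[simp] lemma octRT_4 (b x : Octo F) : octRT b x 4 = b 6 * x 2 - b 5 * x 3 + b 0 * x 4 + b 1 * x 7 := rfl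
@[simp] lemma octRT_5 (b x : Octo F) : octRT b x 5 = - b 6 * x 1 + b 4 * x 3 + b 0 * x 5 + b 2 * x 7 := rfl
@[simp] lemma octRT_6 (b x : Octo F) : octRT b x 6 = b 5 * x 1 - b 4 * x 2 + b 0 * x 6 + b 3 * x 7 := rfl
@[simp] lemma octRT_7 (b x : Octo F) : octRT b x 7 = b 4 * x 4 + b 5 * x 5 + b 6 * x 6 + b 7 * x 7 := rfl

def octJv (x : Octo F) : Octo F := ![x 7, -x 4, -x 5, -x 6, -x 1, -x 2, -x 3, x 0]
@[simp] lemma octJv_0 (x : Octo F) : octJv x 0 = x 7 := rfl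
@[simp] lemma octJv_1 (x : Octo F) : octJv x 1 = -x 4 := rfl
@[simp] lemma octJv_2 (x : Octo F) : octJv x 2 = -x 5 := rfl
@[simp] lemma octJv_3 (x : Octo F) : octJv x 3 = -x 6 := rfl
@[simp] lemma octJv_4 (x : Octo F) : octJv x 4 = -x 1 := rfl
@[simp] lemma octJv_5 (x : Octo F) : octJv x 5 = -x 2 := rfl
@[simp] lemma octJv_6 (x : Octo F) : octJv x 6 = -x 3 := rfl
@[simp] lemma octJv_7 (x : Octo F) : octJv x 7 = x 0 := rfl

lemma jmat_mulVec (x : Octo F) : jmat *ᵥ x = octJv x := by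
  refine octo_ext ?_ ?_ ?_ ?_ ?_ ?_ ?_ ?_ <;>
    simp [Matrix.mulVec, dotProduct, Fin.sum_univ_eight]

lemma lmatT_mulVec (b x : Octo F) : (lmat b)ᵀ *ᵥ x = octLT b x := by
  refine octo_ext ?_ ?_ ?_ ?_ ?_ ?_ ?_ ?_ <;>
    simp [Matrix.mulVec, dotProduct, Fin.sum_univ_eight, Matrix.transpose_apply] <;> ring

lemma rmatT_mulVec (b x : Octo F) : (rmat b)ᵀ *ᵥ x = octRT b x := by
  refine octo_ext ?_ ?_ ?_ ?_ ?_ ?_ ?_ ?_ <;>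
    simp [Matrix.mulVec, dotProduct, Fin.sum_univ_eight, Matrix.transpose_apply] <;> ring


lemma octo_eta (x : Octo F) : x = ![x 0, x 1, x 2, x 3, x 4, x 5, x 6, x 7] := by
  refine octo_ext ?_ ?_ ?_ ?_ ?_ ?_ ?_ ?_ <;> rfl

lemma mat_ext_mulVec {M N : Matrix (Fin 8) (Fin 8) F} (h : ∀ x : Octo F, M *ᵥ x = N *ᵥ x) :
    M = N := by
  ext i j
  have := congrFun (h (Pi.single j 1)) i
  simpa using this

lemma lmat_mulVec (b x : Octo F) : lmat b *ᵥ x = octMul b x := by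
  refine octo_ext ?_ ?_ ?_ ?_ ?_ ?_ ?_ ?_ <;>
    simp [Matrix.mulVec, dotProduct, Fin.sum_univ_eight] <;> ring

lemma rmat_mulVec (b x : Octo F) : rmat b *ᵥ x = octMul x b := by
  refine octo_ext ?_ ?_ ?_ ?_ ?_ ?_ ?_ ?_ <;>
    simp [Matrix.mulVec, dotProduct, Fin.sum_univ_eight] <;> ring

lemma lmat_conj_eq (b : Octo F) : lmat (octConj b) = jmat * (lmat b)ᵀ * jmat := by
  refine (mat_ext_mulVec fun x => ?_).symm
  rw [Matrix.mul_assoc, ← Matrix.mulVec_mulVec, ← Matrix.mulVec_mulVec, jmat_mulVec,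
    lmatT_mulVec, jmat_mulVec, lmat_mulVec]
  refine octo_ext ?_ ?_ ?_ ?_ ?_ ?_ ?_ ?_ <;> simp <;> ring

lemma rmat_conj_eq (b : Octo F) : rmat (octConj b) = jmat * (rmat b)ᵀ * jmat := by
  refine (mat_ext_mulVec fun x => ?_).symm
  rw [Matrix.mul_assoc, ← Matrix.mulVec_mulVec, ← Matrix.mulVec_mulVec, jmat_mulVec,
    rmatT_mulVec, jmat_mulVec, rmat_mulVec]
  refine octo_ext ?_ ?_ ?_ ?_ ?_ ?_ ?_ ?_ <;> simp <;> ring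

lemma rank_lmat_conj (b : Octo F) : (lmat (F := F) (octConj b)).rank = (lmat b).rank := by
  have key : ∀ c : Octo F, (lmat (F := F) (octConj c)).rank ≤ (lmat c).rank := by
    intro c
    rw [lmat_conj_eq]
    calc (jmat * (lmat c)ᵀ * jmat).rank ≤ (jmat * (lmat c)ᵀ).rank :=
          Matrix.rank_mul_le_left _ _
      _ ≤ ((lmat c)ᵀ).rank := Matrix.rank_mul_le_right _ _
      _ = (lmat c).rank := Matrix.rank_transpose _
  refine le_antisymm (key b) ?_
  have h := key (octConj b)
  rwa [conj_conj] at h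

lemma rank_rmat_conj (b : Octo F) : (rmat (F := F) (octConj b)).rank = (rmat b).rank := by
  have key : ∀ c : Octo F, (rmat (F := F) (octConj c)).rank ≤ (rmat c).rank := by
    intro c
    rw [rmat_conj_eq]
    calc (jmat * (rmat c)ᵀ * jmat).rank ≤ (jmat * (rmat c)ᵀ).rank :=
          Matrix.rank_mul_le_left _ _
      _ ≤ ((rmat c)ᵀ).rank := Matrix.rank_mul_le_right _ _
      _ = (rmat c).rank := Matrix.rank_transpose _
  refine le_antisymm (key b) ?_
  have h := key (octConj b)
  rwa [conj_conj] at h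

lemma finrank_octo : Module.finrank F (Octo F) = 8 := by
  simp [Module.finrank_pi]

lemma rank_lmat_le (b : Octo F) (hb : octNorm b = 0) : (lmat b).rank ≤ 4 := by
  have hcomp : LinearMap.range (lmat b).mulVecLin ≤ LinearMap.ker (lmat (octConj b)).mulVecLin := by
    rintro y ⟨x, rfl⟩
    show (lmat (octConj b)).mulVecLin ((lmat b).mulVecLin x) = 0
    simp only [Matrix.mulVecLin_apply, lmat_mulVec]
    rw [conj_mul_mul, hb, zero_smul]
  have h1 : (lmat b).rank ≤ Module.finrank F (LinearMap.ker (lmat (octConj b)).mulVecLin) :=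
    Submodule.finrank_mono hcomp
  have h2 := LinearMap.finrank_range_add_finrank_ker (lmat (F := F) (octConj b)).mulVecLin
  rw [finrank_octo] at h2
  have h3 : Module.finrank F (LinearMap.range (lmat (F := F) (octConj b)).mulVecLin)
      = (lmat (F := F) b).rank := rank_lmat_conj b
  omega

lemma rank_rmat_le (b : Octo F) (hb : octNorm b = 0) : (rmat b).rank ≤ 4 := by
  have hcomp : LinearMap.range (rmat b).mulVecLin ≤ LinearMap.ker (rmat (octConj b)).mulVecLin := by
    rintro y ⟨x, rfl⟩
    show (rmat (octConj b)).mulVecLin ((rmat b).mulVecLin x) = 0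
    simp only [Matrix.mulVecLin_apply, rmat_mulVec]
    rw [mul_mul_conj, hb, zero_smul]
  have h1 : (rmat b).rank ≤ Module.finrank F (LinearMap.ker (rmat (octConj b)).mulVecLin) :=
    Submodule.finrank_mono hcomp
  have h2 := LinearMap.finrank_range_add_finrank_ker (rmat (F := F) (octConj b)).mulVecLin
  rw [finrank_octo] at h2
  have h3 : Module.finrank F (LinearMap.range (rmat (F := F) (octConj b)).mulVecLin)
      = (rmat (F := F) b).rank := rank_rmat_conj b
  omega

lemma lmulL_eq_mulVecLin (b : Octo F) : lmulL b = (lmat b).mulVecLin := by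
  refine LinearMap.ext fun x => ?_
  rw [Matrix.mulVecLin_apply, lmat_mulVec, lmulL_apply]

lemma rmulL_eq_mulVecLin (b : Octo F) : rmulL b = (rmat b).mulVecLin := by
  refine LinearMap.ext fun x => ?_
  rw [Matrix.mulVecLin_apply, rmat_mulVec, rmulL_apply]

lemma finrank_range_lmulL_le (b : Octo F) (hb : octNorm b = 0) :
    Module.finrank F (LinearMap.range (lmulL b)) ≤ 4 := by
  rw [lmulL_eq_mulVecLin]
  exact rank_lmat_le b hb

lemma finrank_range_rmulL_le (b : Octo F) (hb : octNorm b = 0) :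
    Module.finrank F (LinearMap.range (rmulL b)) ≤ 4 := by
  rw [rmulL_eq_mulVecLin]
  exact rank_rmat_le b hb

lemma rmulL_bijective {b : Octo F} (hb : octNorm b ≠ 0) : Function.Bijective (rmulL b) := by
  apply Function.bijective_iff_has_inverse.mpr
  refine ⟨fun x => (octNorm b)⁻¹ • octMul x (octConj b), fun x => ?_, fun x => ?_⟩
  · simp only [rmulL_apply]
    rw [mul_mul_conj, smul_smul, inv_mul_cancel₀ hb, one_smul]
  · simp only [rmulL_apply]
    rw [show octMul ((octNorm b)⁻¹ • octMul x (octConj b)) b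
        = (octNorm b)⁻¹ • octMul (octMul x (octConj b)) b from (rmulL b).map_smul _ _]
    have h := mul_mul_conj (octConj b) x
    rw [conj_conj, norm_conj] at h
    rw [h, smul_smul, inv_mul_cancel₀ hb, one_smul]

lemma lmulL_bijective {b : Octo F} (hb : octNorm b ≠ 0) : Function.Bijective (lmulL b) := by
  apply Function.bijective_iff_has_inverse.mpr
  refine ⟨fun x => (octNorm b)⁻¹ • octMul (octConj b) x, fun x => ?_, fun x => ?_⟩
  · simp only [lmulL_apply]
    rw [conj_mul_mul, smul_smul, inv_mul_cancel₀ hb, one_smul]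
  · simp only [lmulL_apply]
    rw [show octMul b ((octNorm b)⁻¹ • octMul (octConj b) x)
        = (octNorm b)⁻¹ • octMul b (octMul (octConj b) x) from (lmulL b).map_smul _ _]
    have h := conj_mul_mul (octConj b) x
    rw [conj_conj, norm_conj] at h
    rw [h, smul_smul, inv_mul_cancel₀ hb, one_smul]

/-- The linear map in `x` underlying a word with a single occurrence of the variable. -/
def wmap {m : ℕ} (a : Fin m → Octo F) : OctWord m → (Octo F →ₗ[F] Octo F)
  | .var => LinearMap.id
  | .const _ => 0
  | .mul w₁ w₂ =>
      if w₂.countVar = 0 then (rmulL (OctWord.eval a 0 w₂)).comp (wmap a w₁)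
      else (lmulL (OctWord.eval a 0 w₁)).comp (wmap a w₂)

lemma eval_const_indep {m : ℕ} (a : Fin m → Octo F) {w : OctWord m} (hw : w.countVar = 0)
    (x y : Octo F) : OctWord.eval a x w = OctWord.eval a y w := by
  induction w with
  | var => simp [OctWord.countVar] at hw
  | const i => rfl
  | mul w₁ w₂ ih₁ ih₂ =>
    have h : w₁.countVar = 0 ∧ w₂.countVar = 0 := by
      have : w₁.countVar + w₂.countVar = 0 := hw
      omega
    show octMul (OctWord.eval a x w₁) (OctWord.eval a x w₂) = _
    rw [ih₁ h.1, ih₂ h.2]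
    rfl

lemma wmap_eval {m : ℕ} (a : Fin m → Octo F) {w : OctWord m} (hw : w.countVar = 1)
    (x : Octo F) : OctWord.eval a x w = wmap a w x := by
  induction w with
  | var => rfl
  | const i => simp [OctWord.countVar] at hw
  | mul w₁ w₂ ih₁ ih₂ =>
    have hsum : w₁.countVar + w₂.countVar = 1 := hw
    by_cases h2 : w₂.countVar = 0
    · have h1 : w₁.countVar = 1 := by omega
      rw [show wmap a (OctWord.mul w₁ w₂)
          = (rmulL (OctWord.eval a 0 w₂)).comp (wmap a w₁) by rw [wmap, if_pos h2]]
      show octMul (OctWord.eval a x w₁) (OctWord.eval a x w₂)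
          = octMul (wmap a w₁ x) (OctWord.eval a 0 w₂)
      rw [ih₁ h1, eval_const_indep a h2 x 0]
    · have h2' : w₂.countVar = 1 := by omega
      have h1 : w₁.countVar = 0 := by omega
      rw [show wmap a (OctWord.mul w₁ w₂)
          = (lmulL (OctWord.eval a 0 w₁)).comp (wmap a w₂) by rw [wmap, if_neg h2]]
      show octMul (OctWord.eval a x w₁) (OctWord.eval a x w₂)
          = octMul (OctWord.eval a 0 w₁) (wmap a w₂ x)
      rw [ih₂ h2', eval_const_indep a h1 x 0]

lemma norm_eval_ne {m : ℕ} {a : Fin m → Octo F} (ha : ∀ i, octNorm (a i) ≠ 0) {w : OctWord m}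
    (hw : w.countVar = 0) (x : Octo F) : octNorm (OctWord.eval a x w) ≠ 0 := by
  induction w with
  | var => simp [OctWord.countVar] at hw
  | const i => exact ha i
  | mul w₁ w₂ ih₁ ih₂ =>
    have h : w₁.countVar = 0 ∧ w₂.countVar = 0 := by
      have : w₁.countVar + w₂.countVar = 0 := hw
      omega
    show octNorm (octMul (OctWord.eval a x w₁) (OctWord.eval a x w₂)) ≠ 0
    rw [norm_mul]
    exact mul_ne_zero (ih₁ h.1) (ih₂ h.2)

lemma norm_eval_zero {m : ℕ} {a : Fin m → Octo F} {i : Fin m} (hn : octNorm (a i) = 0)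
    {w : OctWord m} (hc : w.countConst i ≠ 0) (x : Octo F) :
    octNorm (OctWord.eval a x w) = 0 := by
  induction w with
  | var => exact absurd rfl hc
  | const j =>
    have hj : j = i := by
      by_contra hne
      exact hc (by simp [OctWord.countConst, hne])
    rw [show OctWord.eval a x (.const j) = a j from rfl, hj, hn]
  | mul w₁ w₂ ih₁ ih₂ =>
    have h : w₁.countConst i ≠ 0 ∨ w₂.countConst i ≠ 0 := by
      have : w₁.countConst i + w₂.countConst i ≠ 0 := hc
      omega
    show octNorm (octMul (OctWord.eval a x w₁) (OctWord.eval a x w₂)) = 0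
    rw [norm_mul]
    rcases h with h | h
    · rw [ih₁ h, zero_mul]
    · rw [ih₂ h, mul_zero]

lemma wmap_bijective {m : ℕ} {a : Fin m → Octo F} (ha : ∀ i, octNorm (a i) ≠ 0)
    {w : OctWord m} (hw : w.countVar = 1) : Function.Bijective (wmap a w) := by
  induction w with
  | var => exact Function.bijective_id
  | const i => simp [OctWord.countVar] at hw
  | mul w₁ w₂ ih₁ ih₂ =>
    have hsum : w₁.countVar + w₂.countVar = 1 := hw
    by_cases h2 : w₂.countVar = 0
    · have h1 : w₁.countVar = 1 := by omega
      rw [show wmap a (OctWord.mul w₁ w₂)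
          = (rmulL (OctWord.eval a 0 w₂)).comp (wmap a w₁) by rw [wmap, if_pos h2]]
      rw [LinearMap.coe_comp]
      exact (rmulL_bijective (norm_eval_ne ha h2 0)).comp (ih₁ h1)
    · have h2' : w₂.countVar = 1 := by omega
      rw [show wmap a (OctWord.mul w₁ w₂)
          = (lmulL (OctWord.eval a 0 w₁)).comp (wmap a w₂) by rw [wmap, if_neg h2]]
      rw [LinearMap.coe_comp]
      exact (lmulL_bijective (norm_eval_ne ha (by omega) 0)).comp (ih₂ h2')

lemma finrank_range_comp_le_left (f g : Octo F →ₗ[F] Octo F) :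
    Module.finrank F (LinearMap.range (f.comp g)) ≤ Module.finrank F (LinearMap.range f) :=
  Submodule.finrank_mono (LinearMap.range_comp_le_range g f)

lemma finrank_range_comp_le_right (f g : Octo F →ₗ[F] Octo F) :
    Module.finrank F (LinearMap.range (f.comp g)) ≤ Module.finrank F (LinearMap.range g) := by
  rw [LinearMap.range_comp]
  exact Submodule.finrank_map_le f _

lemma wmap_rank_le {m : ℕ} {a : Fin m → Octo F} {i : Fin m} (hn : octNorm (a i) = 0)
    {w : OctWord m} (hw : w.countVar = 1) (hc : w.countConst i ≠ 0) :
    Module.finrank F (LinearMap.range (wmap a w)) ≤ 4 := by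
  induction w with
  | var => exact absurd rfl hc
  | const j => simp [OctWord.countVar] at hw
  | mul w₁ w₂ ih₁ ih₂ =>
    have hsum : w₁.countVar + w₂.countVar = 1 := hw
    have hcc : w₁.countConst i + w₂.countConst i ≠ 0 := hc
    by_cases h2 : w₂.countVar = 0
    · have h1 : w₁.countVar = 1 := by omega
      rw [show wmap a (OctWord.mul w₁ w₂)
          = (rmulL (OctWord.eval a 0 w₂)).comp (wmap a w₁) by rw [wmap, if_pos h2]]
      by_cases hc2 : w₂.countConst i = 0
      · have hc1 : w₁.countConst i ≠ 0 := by omega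
        exact le_trans (finrank_range_comp_le_right _ _) (ih₁ h1 hc1)
      · refine le_trans (finrank_range_comp_le_left _ _) ?_
        exact finrank_range_rmulL_le _ (norm_eval_zero hn hc2 0)
    · have h2' : w₂.countVar = 1 := by omega
      have h1 : w₁.countVar = 0 := by omega
      rw [show wmap a (OctWord.mul w₁ w₂)
          = (lmulL (OctWord.eval a 0 w₁)).comp (wmap a w₂) by rw [wmap, if_neg h2]]
      by_cases hc1 : w₁.countConst i = 0
      · have hc2 : w₂.countConst i ≠ 0 := by omega
        exact le_trans (finrank_range_comp_le_right _ _) (ih₂ h2' hc2)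
      · refine le_trans (finrank_range_comp_le_left _ _) ?_
        exact finrank_range_lmulL_le _ (norm_eval_zero hn hc1 0)

lemma zero_ne_octOne : (0 : Octo F) ≠ octOne := by
  intro h
  have h1 : (0 : F) = 1 := congrFun h 7
  exact zero_ne_one h1

lemma flat_nonempty {d : ℕ} {X : Set (Octo F)} (h : IsFlat d X) : X.Nonempty := by
  obtain ⟨V, a, -, rfl⟩ := h
  exact ⟨0 + a, ⟨0, V.zero_mem, rfl⟩⟩

lemma flat_pair {d : ℕ} (hd : 1 ≤ d) {X : Set (Octo F)} (h : IsFlat d X) :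
    ∃ p q, p ∈ X ∧ q ∈ X ∧ p ≠ q := by
  obtain ⟨V, a, hV, rfl⟩ := h
  have hVne : V ≠ ⊥ := by
    intro hbot
    rw [hbot, finrank_bot] at hV
    omega
  obtain ⟨v, hv, hvne⟩ := (Submodule.ne_bot_iff V).mp hVne
  refine ⟨v + a, 0 + a, ⟨v, hv, rfl⟩, ⟨0, V.zero_mem, rfl⟩, fun heq => ?_⟩
  exact hvne (by simpa using add_right_cancel heq)

lemma flat_ne_univ {d : ℕ} (hd : d ≤ 7) {X : Set (Octo F)} (h : IsFlat d X) :
    X ≠ Set.univ := by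
  obtain ⟨V, a, hV, rfl⟩ := h
  intro hU
  have hVtop : V = ⊤ := by
    rw [Submodule.eq_top_iff']
    intro y
    have hy : y + a ∈ (fun v => v + a) '' (V : Set (Octo F)) := hU ▸ Set.mem_univ _
    obtain ⟨v, hv, hveq⟩ := hy
    rwa [show v = y from add_right_cancel hveq] at hv
  rw [hVtop, finrank_top, finrank_octo] at hV
  omega

lemma pair_not_singleton {X : Set (Octo F)} {p q : Octo F} (hp : p ∈ X) (hq : q ∈ X)
    (hne : p ≠ q) : ¬∃ x₀, X = {x₀} := by
  rintro ⟨x₀, rfl⟩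
  exact hne (hp.trans hq.symm)

lemma singleton_ne_univ (x₀ : Octo F) : ({x₀} : Set (Octo F)) ≠ Set.univ := by
  intro h
  have h0 : (0 : Octo F) ∈ ({x₀} : Set (Octo F)) := h ▸ Set.mem_univ _
  have h1 : octOne ∈ ({x₀} : Set (Octo F)) := h ▸ Set.mem_univ _
  exact zero_ne_octOne (Set.mem_singleton_iff.mp h0 |>.trans (Set.mem_singleton_iff.mp h1).symm)

/-- The mutually-exclusive version of the four-fold classification. -/
lemma exclusive {X : Set (Octo F)}
    (h : X = ∅ ∨ (∃ x₀, X = {x₀}) ∨ (∃ r, 4 ≤ r ∧ r ≤ 7 ∧ IsFlat r X) ∨ X = Set.univ) :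
    ((X = ∅ ∧ ¬(∃ x₀ : Octo F, X = {x₀}) ∧ (¬∃ r : ℕ, 4 ≤ r ∧ r ≤ 7 ∧ IsFlat r X) ∧
        ¬X = Set.univ) ∨
      (¬X = ∅ ∧ (∃ x₀ : Octo F, X = {x₀}) ∧ (¬∃ r : ℕ, 4 ≤ r ∧ r ≤ 7 ∧ IsFlat r X) ∧
        ¬X = Set.univ) ∨
      (¬X = ∅ ∧ ¬(∃ x₀ : Octo F, X = {x₀}) ∧ (∃ r : ℕ, 4 ≤ r ∧ r ≤ 7 ∧ IsFlat r X) ∧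
        ¬X = Set.univ) ∨
      (¬X = ∅ ∧ ¬(∃ x₀ : Octo F, X = {x₀}) ∧ (¬∃ r : ℕ, 4 ≤ r ∧ r ≤ 7 ∧ IsFlat r X) ∧
        X = Set.univ)) := by
  rcases h with h | ⟨x₀, h⟩ | ⟨r, h4, h7, hf⟩ | h
  · refine Or.inl ⟨h, ?_, ?_, ?_⟩
    · rintro ⟨x₀, h'⟩
      exact Set.singleton_ne_empty x₀ (h'.symm.trans h)
    · rintro ⟨r, h4, h7, hf⟩
      obtain ⟨p, hp⟩ := flat_nonempty hf
      rw [h] at hp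
      exact hp
    · rw [h]
      intro h'
      exact Set.empty_ne_univ h'
  · refine Or.inr (Or.inl ⟨?_, ⟨x₀, h⟩, ?_, ?_⟩)
    · rw [h]; exact Set.singleton_ne_empty x₀
    · rintro ⟨r, h4, h7, hf⟩
      obtain ⟨p, q, hp, hq, hne⟩ := flat_pair (by omega) hf
      exact pair_not_singleton hp hq hne ⟨x₀, h⟩
    · rw [h]; exact singleton_ne_univ x₀
  · refine Or.inr (Or.inr (Or.inl ⟨?_, ?_, ⟨r, h4, h7, hf⟩, flat_ne_univ h7 hf⟩))
    · obtain ⟨p, hp⟩ := flat_nonempty hf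
      intro h'
      rw [h'] at hp
      exact hp
    · obtain ⟨p, q, hp, hq, hne⟩ := flat_pair (by omega) hf
      exact pair_not_singleton hp hq hne
  · refine Or.inr (Or.inr (Or.inr ⟨?_, ?_, ?_, h⟩))
    · rw [h]; intro h'; exact Set.empty_ne_univ h'.symm
    · exact pair_not_singleton (h ▸ Set.mem_univ (0 : Octo F)) (h ▸ Set.mem_univ octOne)
        zero_ne_octOne
    · rintro ⟨r, h4, h7, hf⟩
      exact flat_ne_univ h7 hf h

lemma sol_eq {m : ℕ} (a : Fin m → Octo F) (c : Octo F) {w : OctWord m}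
    (hw : w.countVar = 1) : octSolW w a c = {x : Octo F | wmap a w x = c} := by
  ext x
  simp only [octSolW, Set.mem_setOf_eq, wmap_eval a hw]

/-- Main classification + uniqueness criterion. -/
lemma classify {m : ℕ} (a : Fin m → Octo F) (c : Octo F) {w : OctWord m}
    (hw : w.Multilinear) :
    (octSolW w a c = ∅ ∨ (∃ x₀, octSolW w a c = {x₀}) ∨
      (∃ r, 4 ≤ r ∧ r ≤ 7 ∧ IsFlat r (octSolW w a c)) ∨ octSolW w a c = Set.univ) ∧
    ((∃ x₀ : Octo F, octSolW w a c = {x₀}) ↔ ∀ i, octNorm (a i) ≠ 0) := by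
  obtain ⟨hv1, hv2⟩ := hw
  have hsol := sol_eq a c hv1
  by_cases P : ∀ i, octNorm (a i) ≠ 0
  · have hbij := wmap_bijective P hv1
    obtain ⟨x₀, hx₀⟩ := hbij.surjective c
    have hX : octSolW w a c = {x₀} := by
      rw [hsol]
      ext y
      simp only [Set.mem_setOf_eq, Set.mem_singleton_iff]
      exact ⟨fun h => hbij.injective (h.trans hx₀.symm), fun h => h ▸ hx₀⟩
    exact ⟨Or.inr (Or.inl ⟨x₀, hX⟩), ⟨fun _ => P, fun _ => ⟨x₀, hX⟩⟩⟩
  · obtain ⟨i, hi⟩ : ∃ i, octNorm (a i) = 0 := by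
      push_neg at P
      obtain ⟨i, hi⟩ := P
      exact ⟨i, hi⟩
    have hc : w.countConst i ≠ 0 := by rw [hv2 i]; exact one_ne_zero
    have hrank : Module.finrank F (LinearMap.range (wmap a w)) ≤ 4 := wmap_rank_le hi hv1 hc
    have hrn := LinearMap.finrank_range_add_finrank_ker (wmap a w)
    rw [finrank_octo] at hrn
    have hker4 : 4 ≤ Module.finrank F (LinearMap.ker (wmap a w)) := by omega
    obtain ⟨v, hv, hvne⟩ : ∃ v ∈ LinearMap.ker (wmap a w), v ≠ 0 := by
      apply (Submodule.ne_bot_iff _).mp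
      intro hbot
      rw [hbot, finrank_bot] at hker4
      omega
    have hnosingle : ¬∃ x₀, octSolW w a c = {x₀} := by
      rintro ⟨x₀, hX⟩
      have hx₀ : x₀ ∈ octSolW w a c := hX ▸ Set.mem_singleton x₀
      have hx₀' : wmap a w x₀ = c := by rw [hsol] at hx₀; exact hx₀
      have hmem : x₀ + v ∈ octSolW w a c := by
        rw [hsol]
        show wmap a w (x₀ + v) = c
        rw [map_add, LinearMap.mem_ker.mp hv, add_zero, hx₀']
      rw [hX] at hmem
      exact hvne (by simpa using Set.mem_singleton_iff.mp hmem)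
    refine ⟨?_, ⟨fun h => absurd h hnosingle, fun h => absurd h P⟩⟩
    by_cases hex : ∃ x₀, wmap a w x₀ = c
    · obtain ⟨x₀, hx₀⟩ := hex
      by_cases hktop : LinearMap.ker (wmap a w) = ⊤
      · refine Or.inr (Or.inr (Or.inr ?_))
        rw [hsol]
        ext y
        simp only [Set.mem_setOf_eq, Set.mem_univ, iff_true]
        have hy : wmap a w (y - x₀) = 0 :=
          LinearMap.mem_ker.mp (hktop ▸ Submodule.mem_top)
        rw [map_sub, sub_eq_zero, hx₀] at hy
        exact hy
      · refine Or.inr (Or.inr (Or.inl ⟨Module.finrank F (LinearMap.ker (wmap a w)),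
          hker4, ?_, LinearMap.ker (wmap a w), x₀, rfl, ?_⟩))
        · have := Submodule.finrank_lt (K := F) (V := Octo F)
            hktop
          rw [finrank_octo] at this
          omega
        · rw [hsol]
          ext y
          simp only [Set.mem_setOf_eq, Set.mem_image, SetLike.mem_coe]
          constructor
          · intro hy
            refine ⟨y - x₀, LinearMap.mem_ker.mpr ?_, by abel⟩
            rw [map_sub, hx₀, hy, sub_self]
          · rintro ⟨u, hu, rfl⟩
            show wmap a w (u + x₀) = c
            rw [map_add, LinearMap.mem_ker.mp hu, zero_add, hx₀]
    · refine Or.inl ?_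
      rw [hsol]
      ext y
      simp only [Set.mem_setOf_eq, Set.mem_empty_iff_false, iff_false]
      exact fun hy => hex ⟨y, hy⟩
@[simp] lemma octOne_0 : (octOne : Octo F) 0 = 1 := rfl
@[simp] lemma octOne_1 : (octOne : Octo F) 1 = 0 := rfl
@[simp] lemma octOne_2 : (octOne : Octo F) 2 = 0 := rfl
@[simp] lemma octOne_3 : (octOne : Octo F) 3 = 0 := rfl
@[simp] lemma octOne_4 : (octOne : Octo F) 4 = 0 := rfl
@[simp] lemma octOne_5 : (octOne : Octo F) 5 = 0 := rfl
@[simp] lemma octOne_6 : (octOne : Octo F) 6 = 0 := rfl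
@[simp] lemma octOne_7 : (octOne : Octo F) 7 = 1 := rfl

@[simp] lemma octU1_0 : (octU1 : Octo F) 0 = 0 := rfl
@[simp] lemma octU1_1 : (octU1 : Octo F) 1 = 1 := rfl
@[simp] lemma octU1_2 : (octU1 : Octo F) 2 = 0 := rfl
@[simp] lemma octU1_3 : (octU1 : Octo F) 3 = 0 := rfl
@[simp] lemma octU1_4 : (octU1 : Octo F) 4 = 0 := rfl
@[simp] lemma octU1_5 : (octU1 : Octo F) 5 = 0 := rfl
@[simp] lemma octU1_6 : (octU1 : Octo F) 6 = 0 := rfl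
@[simp] lemma octU1_7 : (octU1 : Octo F) 7 = 0 := rfl

lemma oct_one_mul (x : Octo F) : octMul octOne x = x := by
  refine octo_ext ?_ ?_ ?_ ?_ ?_ ?_ ?_ ?_ <;> simp

lemma oct_zero_mul (x : Octo F) : octMul 0 x = 0 := by
  refine octo_ext ?_ ?_ ?_ ?_ ?_ ?_ ?_ ?_ <;> simp

lemma octU1_mul_octU1 : octMul (octU1 : Octo F) octU1 = 0 := by
  refine octo_ext ?_ ?_ ?_ ?_ ?_ ?_ ?_ ?_ <;> simp

lemma octU1_ne_zero : (octU1 : Octo F) ≠ 0 := by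
  intro h
  exact one_ne_zero (congrFun h 1 : (1 : F) = 0)

lemma octOne_ne_zero : (octOne : Octo F) ≠ 0 := by
  intro h
  exact one_ne_zero (congrFun h 0 : (1 : F) = 0)

lemma ex_empty : ∃ (m' : ℕ) (a' : Fin m' → Octo F) (c' : Octo F) (w' : OctWord m'),
    1 ≤ m' ∧ (∀ i, a' i ≠ 0) ∧ w'.Multilinear ∧ octSolW w' a' c' = ∅ := by
  refine ⟨1, fun _ => octU1, octOne, .mul (.const 0) .var, le_refl 1,
    fun _ => octU1_ne_zero, ⟨rfl, fun i => by fin_cases i <;> rfl⟩, ?_⟩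
  rw [Set.eq_empty_iff_forall_notMem]
  intro x hx
  have hx' : octMul octU1 x = octOne := hx
  have h7 := congrFun hx' 7
  rw [octMul_7] at h7
  simp at h7

lemma ex_single : ∃ (m' : ℕ) (a' : Fin m' → Octo F) (c' : Octo F) (w' : OctWord m'),
    1 ≤ m' ∧ (∀ i, a' i ≠ 0) ∧ w'.Multilinear ∧ ∃ x₀ : Octo F, octSolW w' a' c' = {x₀} := by
  refine ⟨1, fun _ => octOne, 0, .mul (.const 0) .var, le_refl 1,
    fun _ => octOne_ne_zero, ⟨rfl, fun i => by fin_cases i <;> rfl⟩, 0, ?_⟩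
  ext y
  show octMul octOne y = 0 ↔ y ∈ ({0} : Set (Octo F))
  rw [oct_one_mul]
  simp

def vecE (y : Fin 4 → F) : Octo F := ![y 0, y 1, 0, 0, 0, y 2, y 3, 0]
@[simp] lemma vecE_0 (y : Fin 4 → F) : vecE y 0 = y 0 := rfl
@[simp] lemma vecE_1 (y : Fin 4 → F) : vecE y 1 = y 1 := rfl
@[simp] lemma vecE_2 (y : Fin 4 → F) : vecE y 2 = 0 := rfl
@[simp] lemma vecE_3 (y : Fin 4 → F) : vecE y 3 = 0 := rfl
@[simp] lemma vecE_4 (y : Fin 4 → F) : vecE y 4 = 0 := rfl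
@[simp] lemma vecE_5 (y : Fin 4 → F) : vecE y 5 = y 2 := rfl
@[simp] lemma vecE_6 (y : Fin 4 → F) : vecE y 6 = y 3 := rfl
@[simp] lemma vecE_7 (y : Fin 4 → F) : vecE y 7 = 0 := rfl

def embed4 : (Fin 4 → F) →ₗ[F] Octo F where
  toFun := vecE
  map_add' y z := by
    refine octo_ext ?_ ?_ ?_ ?_ ?_ ?_ ?_ ?_ <;> simp
  map_smul' r y := by
    refine octo_ext ?_ ?_ ?_ ?_ ?_ ?_ ?_ ?_ <;> simp

@[simp] lemma embed4_apply (y : Fin 4 → F) : embed4 y = vecE y := rfl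

lemma embed4_inj : Function.Injective (embed4 : (Fin 4 → F) →ₗ[F] Octo F) := by
  intro y z h
  funext i
  fin_cases i
  · exact (congrFun h 0 : vecE y 0 = vecE z 0)
  · exact (congrFun h 1 : vecE y 1 = vecE z 1)
  · exact (congrFun h 5 : vecE y 5 = vecE z 5)
  · exact (congrFun h 6 : vecE y 6 = vecE z 6)

lemma ex_flat : ∃ (m' : ℕ) (a' : Fin m' → Octo F) (c' : Octo F) (w' : OctWord m'),
    1 ≤ m' ∧ (∀ i, a' i ≠ 0) ∧ w'.Multilinear ∧
    ∃ r : ℕ, 4 ≤ r ∧ r ≤ 7 ∧ IsFlat r (octSolW w' a' c') := by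
  refine ⟨1, fun _ => octU1, 0, .mul (.const 0) .var, le_refl 1,
    fun _ => octU1_ne_zero, ⟨rfl, fun i => by fin_cases i <;> rfl⟩, 4, le_refl 4,
    by omega, LinearMap.range embed4, 0, ?_, ?_⟩
  · rw [LinearMap.finrank_range_of_inj embed4_inj]
    simp [Module.finrank_pi]
  · ext x
    show octMul octU1 x = 0 ↔ _
    constructor
    · intro hx
      have h2 : x 2 = 0 := by have := congrFun hx 6; rw [octMul_6] at this; simpa using this
      have h3 : x 3 = 0 := by have := congrFun hx 5; rw [octMul_5] at this; simpa using this
      have h4 : x 4 = 0 := by have := congrFun hx 0; rw [octMul_0] at this; simpa using this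
      have h7 : x 7 = 0 := by have := congrFun hx 1; rw [octMul_1] at this; simpa using this
      refine ⟨embed4 ![x 0, x 1, x 5, x 6], ⟨![x 0, x 1, x 5, x 6], rfl⟩, ?_⟩
      show embed4 ![x 0, x 1, x 5, x 6] + 0 = x
      rw [add_zero]
      refine octo_ext ?_ ?_ ?_ ?_ ?_ ?_ ?_ ?_ <;>
        simp [h2, h3, h4, h7] <;> rfl
    · rintro ⟨v, ⟨y, rfl⟩, rfl⟩
      show octMul octU1 (embed4 y + 0) = 0
      rw [add_zero]
      refine octo_ext ?_ ?_ ?_ ?_ ?_ ?_ ?_ ?_ <;> simp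

lemma ex_univ : ∃ (m' : ℕ) (a' : Fin m' → Octo F) (c' : Octo F) (w' : OctWord m'),
    1 ≤ m' ∧ (∀ i, a' i ≠ 0) ∧ w'.Multilinear ∧ octSolW w' a' c' = Set.univ := by
  refine ⟨2, ![octU1, octU1], 0, .mul (.mul (.const 0) (.const 1)) .var, by omega,
    fun i => by fin_cases i <;> exact octU1_ne_zero,
    ⟨rfl, fun i => by fin_cases i <;> rfl⟩, ?_⟩
  rw [Set.eq_univ_iff_forall]
  intro x
  show octMul (octMul octU1 octU1) x = 0
  rw [octU1_mul_octU1, oct_zero_mul]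

end OctAux

/-- The solution set of a linear monomial equation `w(a₁, …, aₘ, x) = c` with nonzero
coefficients is empty, a singleton, a flat of dimension `4 ≤ r ≤ 7`, or all of `O`;
each case occurs; and there is a unique solution iff all coefficients are invertible. -/
theorem stmt_18 [IsAlgClosed F] {m : ℕ} (hm : 1 ≤ m) (a : Fin m → Octo F)
    (ha : ∀ i, a i ≠ 0) (c : Octo F) (w : OctWord m) (hw : w.Multilinear) :
    ((octSolW w a c = ∅ ∧ ¬ (∃ x₀ : Octo F, octSolW w a c = {x₀}) ∧
        (¬ ∃ r : ℕ, 4 ≤ r ∧ r ≤ 7 ∧ IsFlat r (octSolW w a c)) ∧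
        ¬ octSolW w a c = Set.univ) ∨
      (¬ octSolW w a c = ∅ ∧ (∃ x₀ : Octo F, octSolW w a c = {x₀}) ∧
        (¬ ∃ r : ℕ, 4 ≤ r ∧ r ≤ 7 ∧ IsFlat r (octSolW w a c)) ∧
        ¬ octSolW w a c = Set.univ) ∨
      (¬ octSolW w a c = ∅ ∧ ¬ (∃ x₀ : Octo F, octSolW w a c = {x₀}) ∧
        (∃ r : ℕ, 4 ≤ r ∧ r ≤ 7 ∧ IsFlat r (octSolW w a c)) ∧
        ¬ octSolW w a c = Set.univ) ∨
      (¬ octSolW w a c = ∅ ∧ ¬ (∃ x₀ : Octo F, octSolW w a c = {x₀}) ∧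
        (¬ ∃ r : ℕ, 4 ≤ r ∧ r ≤ 7 ∧ IsFlat r (octSolW w a c)) ∧
        octSolW w a c = Set.univ)) ∧
    (∃ (m' : ℕ) (a' : Fin m' → Octo F) (c' : Octo F) (w' : OctWord m'),
      1 ≤ m' ∧ (∀ i, a' i ≠ 0) ∧ w'.Multilinear ∧ octSolW w' a' c' = ∅) ∧
    (∃ (m' : ℕ) (a' : Fin m' → Octo F) (c' : Octo F) (w' : OctWord m'),
      1 ≤ m' ∧ (∀ i, a' i ≠ 0) ∧ w'.Multilinear ∧ ∃ x₀ : Octo F, octSolW w' a' c' = {x₀}) ∧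
    (∃ (m' : ℕ) (a' : Fin m' → Octo F) (c' : Octo F) (w' : OctWord m'),
      1 ≤ m' ∧ (∀ i, a' i ≠ 0) ∧ w'.Multilinear ∧
      ∃ r : ℕ, 4 ≤ r ∧ r ≤ 7 ∧ IsFlat r (octSolW w' a' c')) ∧
    (∃ (m' : ℕ) (a' : Fin m' → Octo F) (c' : Octo F) (w' : OctWord m'),
      1 ≤ m' ∧ (∀ i, a' i ≠ 0) ∧ w'.Multilinear ∧ octSolW w' a' c' = Set.univ) ∧
    ((∃ x₀ : Octo F, octSolW w a c = {x₀}) ↔ ∀ i, octNorm (a i) ≠ 0) := by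
  refine ⟨OctAux.exclusive (OctAux.classify a c hw).1, OctAux.ex_empty, OctAux.ex_single,
    OctAux.ex_flat, OctAux.ex_univ, (OctAux.classify a c hw).2⟩
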